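/- For every integer n ≥ 0 and every real x: 2^n·β_{n,λ/2}(x/2) = Σ_{k=0}^{n} C(n,k)·β_{k,λ}·E_{n−k,λ}(x), where β_{n,λ/2}(x/2) denotes the degenerate Bernoulli polynomial with parameter λ/2 evaluated at x/2. -/

import Mathlib

open Finset PowerSeries

noncomputable def dff (lam x : ℝ) (n : ℕ) : ℝ := ∏ i ∈ Finset.range n, (x - i * lam)

noncomputable def degExp (lam x : ℝ) : PowerSeries ℝ :=
  PowerSeries.mk fun k => dff lam x k / k.factorial

lemma dff_succ (lam x : ℝ) (n : ℕ) : dff lam x (n+1) = dff lam x n * (x - n * lam) := by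
  simp [dff, Finset.prod_range_succ]

lemma dff_vandermonde (lam a b : ℝ) (n : ℕ) :
    dff lam (a + b) n
      = ∑ k ∈ Finset.range (n+1), (n.choose k : ℝ) * dff lam a k * dff lam b (n - k) := by
  induction n with
  | zero => simp [dff]
  | succ n ih =>
    rw [dff_succ, ih, Finset.sum_mul]
    have step : ∀ k ∈ Finset.range (n+1),
        (n.choose k : ℝ) * dff lam a k * dff lam b (n-k) * (a + b - n * lam)
        = (n.choose k : ℝ) * dff lam a (k+1) * dff lam b (n-k)
          + (n.choose k : ℝ) * dff lam a k * dff lam b (n-k+1) := by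
      intro k hk
      have hk' : k ≤ n := Nat.lt_succ_iff.mp (Finset.mem_range.mp hk)
      have hc : ((n - k : ℕ) : ℝ) = (n : ℝ) - k := by
        push_cast [Nat.cast_sub hk']; ring
      rw [dff_succ, dff_succ, show (a + b - n * lam) = (a - k * lam) + (b - ((n-k : ℕ) : ℝ) * lam) by rw [hc]; ring]
      ring
    rw [Finset.sum_congr rfl step, Finset.sum_add_distrib]
    rw [Finset.sum_range_succ'
      (fun k => (((n+1).choose k : ℕ) : ℝ) * dff lam a k * dff lam b (n+1-k)) (n+1)]
    have hrhs : ∀ i ∈ Finset.range (n+1),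
        (((n+1).choose (i+1) : ℕ) : ℝ) * dff lam a (i+1) * dff lam b (n+1-(i+1))
        = (n.choose i : ℝ) * dff lam a (i+1) * dff lam b (n-i)
          + (n.choose (i+1) : ℝ) * dff lam a (i+1) * dff lam b (n-i) := by
      intro i _
      rw [Nat.choose_succ_succ, Nat.succ_sub_succ]
      push_cast
      ring
    rw [Finset.sum_congr rfl hrhs, Finset.sum_add_distrib]
    -- second LHS sum: reindex
    have hS2 : ∑ k ∈ Finset.range (n+1), (n.choose k : ℝ) * dff lam a k * dff lam b (n-k+1)
        = dff lam b (n+1) + ∑ i ∈ Finset.range n, (n.choose (i+1) : ℝ) * dff lam a (i+1) * dff lam b (n-i) := by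
      rw [Finset.sum_range_succ' (fun k => (n.choose k : ℝ) * dff lam a k * dff lam b (n-k+1)) n]
      have : ∀ i ∈ Finset.range n,
          (n.choose (i+1) : ℝ) * dff lam a (i+1) * dff lam b (n-(i+1)+1)
          = (n.choose (i+1) : ℝ) * dff lam a (i+1) * dff lam b (n-i) := by
        intro i hi
        have hi' : i < n := Finset.mem_range.mp hi
        have h : n - (i+1) + 1 = n - i := by omega
        rw [h]
      rw [Finset.sum_congr rfl this]
      have ha0 : dff lam a 0 = 1 := by simp [dff]
      simp only [Nat.choose_zero_right, Nat.cast_one, ha0, Nat.sub_zero, one_mul, mul_one]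
      ring
    have hS3 : ∑ i ∈ Finset.range (n+1), (n.choose (i+1) : ℝ) * dff lam a (i+1) * dff lam b (n-i)
        = ∑ i ∈ Finset.range n, (n.choose (i+1) : ℝ) * dff lam a (i+1) * dff lam b (n-i) := by
      rw [Finset.sum_range_succ, Nat.choose_succ_self]
      simp
    rw [hS2, hS3]
    have ha0 : dff lam a 0 = 1 := by simp [dff]
    simp only [Nat.choose_zero_right, Nat.cast_one, ha0, Nat.sub_zero, one_mul, mul_one]
    ring

lemma rescale_degExp (lam y : ℝ) :
    rescale (2 : ℝ) (degExp (lam / 2) y) = degExp lam (2 * y) := by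
  ext n
  rw [coeff_rescale]
  simp only [degExp, coeff_mk]
  rw [show (2:ℝ)^n * (dff (lam/2) y n / n.factorial) = ((2:ℝ)^n * dff (lam/2) y n) / n.factorial by ring]
  congr 1
  have h2 : (2:ℝ)^n = ∏ _i ∈ Finset.range n, (2:ℝ) := by simp
  rw [dff, dff, h2, ← Finset.prod_mul_distrib]
  exact Finset.prod_congr rfl fun i _ => by ring

lemma degExp_zero (lam : ℝ) : degExp lam 0 = 1 := by
  ext n
  simp only [degExp, coeff_mk, PowerSeries.coeff_one]
  cases n with
  | zero => simp [dff]
  | succ n =>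
    have : dff lam 0 (n+1) = 0 := by
      apply Finset.prod_eq_zero (Finset.mem_range.mpr (Nat.succ_pos n))
      simp
    simp [this]

lemma degExp_add (lam a b : ℝ) : degExp lam a * degExp lam b = degExp lam (a + b) := by
  ext n
  rw [PowerSeries.coeff_mul, Finset.Nat.sum_antidiagonal_eq_sum_range_succ_mk]
  simp only [degExp, coeff_mk, dff_vandermonde, Finset.sum_div]
  apply Finset.sum_congr rfl
  intro k hk
  have hk' : k ≤ n := Nat.lt_succ_iff.mp (Finset.mem_range.mp hk)
  have hfac : ((n.choose k : ℕ) : ℝ) * (k.factorial : ℝ) * ((n-k).factorial : ℝ) = (n.factorial : ℝ) := by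
    rw_mod_cast [Nat.choose_mul_factorial_mul_factorial hk']
  have h1 : (k.factorial : ℝ) ≠ 0 := Nat.cast_ne_zero.mpr k.factorial_ne_zero
  have h2 : ((n-k).factorial : ℝ) ≠ 0 := Nat.cast_ne_zero.mpr (n-k).factorial_ne_zero
  have h3 : (n.factorial : ℝ) ≠ 0 := Nat.cast_ne_zero.mpr n.factorial_ne_zero
  field_simp
  rw [← hfac]
  ring

theorem stmt7 (lam : ℝ) (hlam : lam ≠ 0)
    (B : ℝ → ℝ → ℕ → ℝ) (E : ℝ → ℕ → ℝ)
    (hB : ∀ μ x, (PowerSeries.mk fun n => B μ x n / n.factorial) * (degExp μ 1 - 1)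
        = (PowerSeries.X : PowerSeries ℝ) * degExp μ x)
    (hE : ∀ x, (PowerSeries.mk fun n => E x n / n.factorial) * (degExp lam 1 + 1)
        = 2 * degExp lam x)
    (n : ℕ) (x : ℝ) :
    2 ^ n * B (lam / 2) (x / 2) n
      = ∑ k ∈ Finset.range (n + 1), (n.choose k : ℝ) * B lam 0 k * E x (n - k) := by
  set e := degExp lam 1 with he
  set F := rescale (2:ℝ) (PowerSeries.mk fun n => B (lam/2) (x/2) n / n.factorial) with hF
  set G := (PowerSeries.mk fun n => B lam 0 n / n.factorial : PowerSeries ℝ) with hG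
  set H := (PowerSeries.mk fun n => E x n / n.factorial : PowerSeries ℝ) with hH
  have h1 : F * (degExp lam 2 - 1) = (PowerSeries.C (R := ℝ) 2 * PowerSeries.X) * degExp lam x := by
    have := congrArg (rescale (2:ℝ)) (hB (lam/2) (x/2))
    rw [map_mul, map_sub, map_one, map_mul, rescale_X, rescale_degExp, rescale_degExp] at this
    norm_num at this
    rw [show (2:ℝ) * (x/2) = x by ring] at this
    exact this
  have h2 : G * (e - 1) = PowerSeries.X := by
    have := hB lam 0
    rwa [degExp_zero, mul_one] at this
  have h3 : H * (e + 1) = 2 * degExp lam x := hE x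
  have hee : e * e = degExp lam 2 := by
    rw [he, degExp_add]; norm_num
  have htwo : (2 : PowerSeries ℝ) = PowerSeries.C (R := ℝ) 2 := by
    rw [← map_ofNat (PowerSeries.C (R := ℝ)) 2]
  have key : F * ((e - 1) * (e + 1)) = (G * H) * ((e - 1) * (e + 1)) := by
    have lhs : (e - 1) * (e + 1) = degExp lam 2 - 1 := by
      rw [← hee]; ring
    calc F * ((e - 1) * (e + 1)) = F * (degExp lam 2 - 1) := by rw [lhs]
      _ = (PowerSeries.C (R := ℝ) 2 * PowerSeries.X) * degExp lam x := h1
      _ = PowerSeries.X * ((2 : PowerSeries ℝ) * degExp lam x) := by rw [htwo]; ring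
      _ = (G * (e - 1)) * (H * (e + 1)) := by rw [h2, h3]
      _ = (G * H) * ((e - 1) * (e + 1)) := by ring
  have hne : (e - 1) * (e + 1) ≠ 0 := by
    apply mul_ne_zero
    · intro h
      have := congrArg (PowerSeries.coeff (R := ℝ) 1) h
      simp [he, degExp, dff] at this
    · intro h
      have := congrArg (PowerSeries.coeff (R := ℝ) 0) h
      simp [he, degExp, dff] at this
  have hFG : F = G * H := mul_right_cancel₀ hne key
  have hco := congrArg (PowerSeries.coeff (R := ℝ) n) hFG
  rw [hF, coeff_rescale, coeff_mk, hG, hH, PowerSeries.coeff_mul,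
    Finset.Nat.sum_antidiagonal_eq_sum_range_succ_mk] at hco
  simp only [coeff_mk] at hco
  have h3' : (n.factorial : ℝ) ≠ 0 := Nat.cast_ne_zero.mpr n.factorial_ne_zero
  calc 2 ^ n * B (lam/2) (x/2) n
      = ((2:ℝ)^n * (B (lam/2) (x/2) n / n.factorial)) * n.factorial := by field_simp
    _ = (∑ k ∈ Finset.range (n+1), B lam 0 k / k.factorial * (E x (n-k) / (n-k).factorial)) * n.factorial := by rw [hco]
    _ = ∑ k ∈ Finset.range (n+1), (n.choose k : ℝ) * B lam 0 k * E x (n-k) := by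
        rw [Finset.sum_mul]
        apply Finset.sum_congr rfl
        intro k hk
        have hk' : k ≤ n := Nat.lt_succ_iff.mp (Finset.mem_range.mp hk)
        have hfac : ((n.choose k : ℕ) : ℝ) * (k.factorial : ℝ) * ((n-k).factorial : ℝ) = (n.factorial : ℝ) := by
          rw_mod_cast [Nat.choose_mul_factorial_mul_factorial hk']
        have h1' : (k.factorial : ℝ) ≠ 0 := Nat.cast_ne_zero.mpr k.factorial_ne_zero
        have h2' : ((n-k).factorial : ℝ) ≠ 0 := Nat.cast_ne_zero.mpr (n-k).factorial_ne_zero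
        field_simp
        rw [← hfac]
        ring
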